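/- Let A = {a < b} be a binary ordered alphabet. A cyclic word w over A is singular (every factorization w = uv into nonempty non-palindromes is synchronizing) if and only if w is balanced (for all factors u, v of the cyclic word w of equal length, ||u|_a − |v|_a| ≤ 1). -/

import Mathlib

set_option linter.unusedSectionVars false


/-- The lexicographic order on words induced by the order of the alphabet, with the
convention that `u ≺ v` whenever `v` is a proper prefix of `u`. -/
def wlt {A : Type*} [LinearOrder A] (u v : List A) : Prop :=
  (v ≠ u ∧ v <+: u) ∨
    ∃ (p s t : List A) (x y : A), x < y ∧ u = p ++ x :: s ∧ v = p ++ y :: t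

/-- The alternating lexicographic order on words: at the first difference, the order of
letters is used at even (0-based) positions and reversed at odd positions; if `v` is a
proper prefix of `u` then `u ≺_alt v` when `|v|` is even and `v ≺_alt u` when `|v|` is odd. -/
def altlt {A : Type*} [LinearOrder A] (u v : List A) : Prop :=
  (v ≠ u ∧ v <+: u ∧ Even v.length) ∨ (u ≠ v ∧ u <+: v ∧ Odd u.length) ∨
    ∃ (p s t : List A) (x y : A), u = p ++ x :: s ∧ v = p ++ y :: t ∧
      ((Even p.length ∧ x < y) ∨ (Odd p.length ∧ y < x))

/-- `r` is a linear representation (rotation) of the cyclic word represented by `w`. -/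
def isRot {A : Type*} (w r : List A) : Prop := ∃ s t : List A, w = s ++ t ∧ r = t ++ s

/-- `f` is a factor of the cyclic word represented by `w`. -/
def isCFactor {A : Type*} (f w : List A) : Prop := ∃ r : List A, isRot w r ∧ f <:+: r

/-- The cyclic word represented by `w` is singular: every factorization of it into two
nonempty non-palindromes `u`, `v` is synchronizing (`u ≺ u*` iff `v ≺ v*`). -/
def cyclicSingular {A : Type*} [LinearOrder A] (w : List A) : Prop :=
  ∀ u v : List A, u ≠ [] → v ≠ [] → isRot w (u ++ v) →
    u ≠ u.reverse → v ≠ v.reverse → (wlt u u.reverse ↔ wlt v v.reverse)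

/-- `δ_b(w) = Σ_{c>b} |w|_c − Σ_{a<b} |w|_a`. -/
def deltaW {A : Type*} [LinearOrder A] [Fintype A] (w : List A) (b : A) : ℤ :=
  (∑ c ∈ Finset.univ.filter (fun c => b < c), (w.count c : ℤ)) -
    (∑ a ∈ Finset.univ.filter (fun a => a < b), (w.count a : ℤ))

section Helpers

variable {A : Type*}

lemma isRot_iff_isRotated {w r : List A} : isRot w r ↔ w ~r r := by
  constructor
  · rintro ⟨s, t, rfl, rfl⟩
    exact ⟨s.length, by
      rw [List.rotate_eq_drop_append_take (by simp), List.drop_left, List.take_left]⟩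
  · rintro ⟨n, rfl⟩
    refine ⟨w.take (n % w.length), w.drop (n % w.length), (List.take_append_drop _ _).symm, ?_⟩
    rw [List.rotate_eq_drop_append_take_mod]

lemma isRot_refl (w : List A) : isRot w w := ⟨w, [], by simp, by simp⟩

lemma isRot.trans {w r r' : List A} (h1 : isRot w r) (h2 : isRot r r') : isRot w r' :=
  isRot_iff_isRotated.2 ((isRot_iff_isRotated.1 h1).trans (isRot_iff_isRotated.1 h2))

lemma isRot.symm {w r : List A} (h : isRot w r) : isRot r w :=
  isRot_iff_isRotated.2 (isRot_iff_isRotated.1 h).symm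

lemma isRot_swap {w u v : List A} (h : isRot w (u ++ v)) : isRot w (v ++ u) :=
  h.trans ⟨u, v, rfl, rfl⟩

lemma isCFactor.infix {f g w : List A} (h : isCFactor f w) (hg : g <:+: f) : isCFactor g w :=
  ⟨h.choose, h.choose_spec.1, hg.trans h.choose_spec.2⟩

lemma isCFactor.of_rot {f w w' : List A} (h : isRot w w') (hf : isCFactor f w') :
    isCFactor f w :=
  ⟨hf.choose, h.trans hf.choose_spec.1, hf.choose_spec.2⟩

lemma isCFactor.mem {f w : List A} (h : isCFactor f w) {x : A} (hx : x ∈ f) : x ∈ w := by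
  obtain ⟨r, hr, hf⟩ := h
  exact ((isRot_iff_isRotated.1 hr).perm.mem_iff).2 (hf.subset hx)

lemma isCFactor.front {f w : List A} (h : isCFactor f w) : ∃ z, isRot w (f ++ z) := by
  obtain ⟨r, hr, s, t, hst⟩ := h
  refine ⟨t ++ s, hr.trans ⟨s, f ++ t, ?_, by simp⟩⟩
  rw [← hst]; simp

lemma append_cons_cases {p₁ p₂ : List A} {x₁ x₂ : A} {t₁ t₂ : List A}
    (h : p₁ ++ x₁ :: t₁ = p₂ ++ x₂ :: t₂) :
    (p₁ = p₂ ∧ x₁ = x₂ ∧ t₁ = t₂) ∨ (∃ q, p₂ = p₁ ++ x₁ :: q) ∨ (∃ q, p₁ = p₂ ++ x₂ :: q) := by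
  induction p₁ generalizing p₂ with
  | nil =>
    cases p₂ with
    | nil => simp_all
    | cons h2 p₂' =>
      simp only [List.nil_append, List.cons_append, List.cons.injEq] at h
      exact Or.inr (Or.inl ⟨p₂', by simp [h.1]⟩)
  | cons h1 p₁' ih =>
    cases p₂ with
    | nil =>
      simp only [List.nil_append, List.cons_append, List.cons.injEq] at h
      exact Or.inr (Or.inr ⟨p₁', by simp [h.1]⟩)
    | cons h2 p₂' =>
      simp only [List.cons_append, List.cons.injEq] at h
      obtain ⟨rfl, h⟩ := h
      rcases ih h with ⟨rfl, rfl, rfl⟩ | ⟨q, rfl⟩ | ⟨q, rfl⟩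
      · exact Or.inl ⟨rfl, rfl, rfl⟩
      · exact Or.inr (Or.inl ⟨q, rfl⟩)
      · exact Or.inr (Or.inr ⟨q, rfl⟩)

lemma append_cons_eq_len {p₁ p₂ : List A} {x₁ x₂ : A} {t₁ t₂ : List A}
    (h : p₁ ++ x₁ :: t₁ = p₂ ++ x₂ :: t₂) (hl : p₁.length = p₂.length) :
    p₁ = p₂ ∧ x₁ = x₂ ∧ t₁ = t₂ := by
  rcases append_cons_cases h with h' | ⟨q, rfl⟩ | ⟨q, rfl⟩
  · exact h'
  · exfalso; simp at hl
  · exfalso; simp at hl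

lemma exists_mismatch : ∀ {l₁ l₂ : List A}, l₁.length = l₂.length → l₁ ≠ l₂ →
    ∃ c x y t₁ t₂, x ≠ y ∧ l₁ = c ++ x :: t₁ ∧ l₂ = c ++ y :: t₂ := by
  intro l₁
  induction l₁ with
  | nil => intro l₂ h hne; cases l₂ <;> simp_all
  | cons x t ih =>
    intro l₂ h hne
    cases l₂ with
    | nil => simp at h
    | cons y t' =>
      by_cases hxy : x = y
      · subst hxy
        have hne' : t ≠ t' := by simpa using hne
        obtain ⟨c, x', y', t₁, t₂, h1, h2, h3⟩ := ih (by simpa using h) hne'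
        exact ⟨x :: c, x', y', t₁, t₂, h1, by simp [h2], by simp [h3]⟩
      · exact ⟨[], x, y, t, t', hxy, rfl, rfl⟩

lemma mismatch_decomp {u : List A} (h : u ≠ u.reverse) :
    ∃ (c q : List A) (x y : A), x ≠ y ∧ u = c ++ [x] ++ q ++ [y] ++ c.reverse := by
  obtain ⟨c, x, y, t₁, t₂, hxy, h1, h2⟩ := exists_mismatch (by simp) h
  have hu2 : u = t₂.reverse ++ y :: c.reverse := by
    have := congrArg List.reverse h2
    simpa using this
  rcases append_cons_cases (h1.symm.trans hu2) with ⟨-, h', -⟩ | ⟨q, hq⟩ | ⟨q, hq⟩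
  · exact absurd h' hxy
  · refine ⟨c, q, x, y, hxy, ?_⟩
    rw [hu2, hq]; simp
  · exfalso
    have h1' : u = t₂.reverse ++ y :: (q ++ x :: t₁) := by rw [h1, hq]; simp
    have := (append_cons_eq_len (h1'.symm.trans hu2) rfl).2.2.symm
    -- this : c.reverse = q ++ x :: t₁
    have hc : c.reverse = q.reverse ++ y :: t₂ := by
      have := congrArg List.reverse hq
      simpa using this
    have := append_cons_eq_len ((this.symm.trans hc)) (by simp)
    exact hxy (this.2.1.trans rfl) |>.elim

end Helpers

section Signs

variable {A : Type*} [LinearOrder A]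

omit [LinearOrder A] in
lemma rev_decomp {u c q : List A} {x y : A}
    (hu : u = c ++ [x] ++ q ++ [y] ++ c.reverse) :
    u.reverse = c ++ [y] ++ q.reverse ++ [x] ++ c.reverse := by
  subst hu; simp

lemma decomp_ne_reverse {u c q : List A} {x y : A} (hxy : x ≠ y)
    (hu : u = c ++ [x] ++ q ++ [y] ++ c.reverse) : u ≠ u.reverse := by
  have hur := rev_decomp hu
  intro he
  have h1 : u = c ++ x :: (q ++ [y] ++ c.reverse) := by rw [hu]; simp
  have h2 : u.reverse = c ++ y :: (q.reverse ++ [x] ++ c.reverse) := by rw [hur]; simp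
  exact hxy (append_cons_eq_len ((h1.symm.trans he).trans h2) rfl).2.1

lemma wlt_of_decomp {u c q : List A} {x y : A} (hxy : x < y)
    (hu : u = c ++ [x] ++ q ++ [y] ++ c.reverse) : wlt u u.reverse := by
  have hur := rev_decomp hu
  refine Or.inr ⟨c, q ++ [y] ++ c.reverse, q.reverse ++ [x] ++ c.reverse, x, y, hxy, ?_, ?_⟩
  · rw [hu]; simp
  · rw [hur]; simp

lemma not_wlt_of_decomp {u c q : List A} {x y : A} (hyx : y < x)
    (hu : u = c ++ [x] ++ q ++ [y] ++ c.reverse) : ¬ wlt u u.reverse := by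
  have hur := rev_decomp hu
  have h1 : u = c ++ x :: (q ++ [y] ++ c.reverse) := by rw [hu]; simp
  have h2 : u.reverse = c ++ y :: (q.reverse ++ [x] ++ c.reverse) := by rw [hur]; simp
  rintro (⟨hne, hpre⟩ | ⟨p, s, t, x', y', hlt, hp1, hp2⟩)
  · exact hne (hpre.eq_of_length (by simp))
  · rcases append_cons_cases (hp1.symm.trans h1) with ⟨rfl, rfl, -⟩ | ⟨g, hg⟩ | ⟨g, hg⟩
    · -- p = c, x' = x
      have := (append_cons_eq_len (hp2.symm.trans h2) rfl).2.1
      subst this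
      exact absurd hlt (lt_asymm hyx)
    · -- c = p ++ x' :: g
      have h2' : u.reverse = p ++ x' :: (g ++ y :: (q.reverse ++ [x] ++ c.reverse)) := by
        rw [h2, hg]; simp
      have := (append_cons_eq_len (hp2.symm.trans h2') rfl).2.1
      exact absurd hlt (by rw [this]; exact lt_irrefl _)
    · -- p = c ++ x :: g
      have hp2' : u.reverse = c ++ x :: (g ++ y' :: t) := by rw [hp2, hg]; simp
      have := (append_cons_eq_len (hp2'.symm.trans h2) rfl).2.1
      exact (ne_of_lt hyx) this.symm

lemma decomp_of_wlt {a b : A} (hab : a < b) {u : List A}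
    (hbin : ∀ x ∈ u, x = a ∨ x = b) (hnp : u ≠ u.reverse) (hw : wlt u u.reverse) :
    ∃ c q, u = c ++ [a] ++ q ++ [b] ++ c.reverse := by
  obtain ⟨c, q, x, y, hxy, hu⟩ := mismatch_decomp hnp
  have hx : x ∈ u := by rw [hu]; simp
  have hy : y ∈ u := by rw [hu]; simp
  rcases hbin x hx with rfl | rfl <;> rcases hbin y hy with rfl | rfl
  · exact absurd rfl hxy
  · exact ⟨c, q, hu⟩
  · exact absurd hw (not_wlt_of_decomp hab hu)
  · exact absurd rfl hxy

lemma decomp_of_not_wlt {a b : A} (hab : a < b) {u : List A}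
    (hbin : ∀ x ∈ u, x = a ∨ x = b) (hnp : u ≠ u.reverse) (hw : ¬ wlt u u.reverse) :
    ∃ c q, u = c ++ [b] ++ q ++ [a] ++ c.reverse := by
  obtain ⟨c, q, x, y, hxy, hu⟩ := mismatch_decomp hnp
  have hx : x ∈ u := by rw [hu]; simp
  have hy : y ∈ u := by rw [hu]; simp
  rcases hbin x hx with rfl | rfl <;> rcases hbin y hy with rfl | rfl
  · exact absurd rfl hxy
  · exact absurd (wlt_of_decomp hab hu) hw
  · exact ⟨c, q, hu⟩
  · exact absurd rfl hxy

end Signs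

section Split

variable {A : Type*}

lemma infix_append_split {v t s : List A} (h : v <:+: t ++ s) :
    v <:+: t ∨ v <:+: s ∨
      ∃ v₁ v₂, v = v₁ ++ v₂ ∧ v₁ ≠ [] ∧ v₂ ≠ [] ∧ v₁ <:+ t ∧ v₂ <+: s := by
  obtain ⟨x, y, hxy⟩ := h
  -- hxy : x ++ v ++ y = t ++ s
  rcases List.append_eq_append_iff.1 (show x ++ (v ++ y) = t ++ s by rw [← hxy]; simp) with
    ⟨a', ht, hvy⟩ | ⟨c', hx, hs⟩
  · -- t = x ++ a', v ++ y = a' ++ s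
    rcases List.append_eq_append_iff.1 hvy with ⟨b', ha', hy⟩ | ⟨c'', hv, hs⟩
    · -- a' = v ++ b'
      exact Or.inl ⟨x, b', by rw [ht, ha']; simp⟩
    · -- v = a' ++ c'', s = c'' ++ y
      rcases eq_or_ne a' [] with rfl | ha
      · exact Or.inr (Or.inl ⟨[], y, by rw [hs, hv]; simp⟩)
      rcases eq_or_ne c'' [] with rfl | hc
      · exact Or.inl ⟨x, [], by rw [ht, hv]; simp⟩
      · exact Or.inr (Or.inr ⟨a', c'', hv, ha, hc, ⟨x, ht.symm⟩, ⟨y, hs.symm⟩⟩)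
  · -- x = t ++ c', s = c' ++ (v ++ y)
    exact Or.inr (Or.inl ⟨c', y, by rw [hs]; simp⟩)

end Split

section Dir2

variable {A : Type*} [LinearOrder A]

lemma unbal_of_mixed {a b : A} (hab : a < b) {w u v : List A}
    (hbin : ∀ x ∈ w, x = a ∨ x = b) (hrot : isRot w (u ++ v))
    (hu : u ≠ u.reverse) (hv : v ≠ v.reverse)
    (hwu : wlt u u.reverse) (hwv : ¬ wlt v v.reverse) :
    ∃ F1 F2, isCFactor F1 w ∧ isCFactor F2 w ∧ F1.length = F2.length ∧
      F2.count a = F1.count a + 2 := by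
  have hmem : ∀ x ∈ u ++ v, x ∈ w := fun x hx =>
    ((isRot_iff_isRotated.1 hrot).perm.mem_iff).2 hx
  have hbu : ∀ x ∈ u, x = a ∨ x = b := fun x hx =>
    hbin x (hmem x (List.mem_append_left _ hx))
  have hbv : ∀ x ∈ v, x = a ∨ x = b := fun x hx =>
    hbin x (hmem x (List.mem_append_right _ hx))
  obtain ⟨s, q, hud⟩ := decomp_of_wlt hab hbu hu hwu
  obtain ⟨t, q', hvd⟩ := decomp_of_not_wlt hab hbv hv hwv
  refine ⟨[b] ++ s.reverse ++ t ++ [b], [a] ++ t.reverse ++ s ++ [a], ?_, ?_,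
    by simp; omega, ?_⟩
  · refine ⟨u ++ v, hrot, s ++ [a] ++ q, q' ++ [a] ++ t.reverse, ?_⟩
    rw [hud, hvd]; simp
  · refine ⟨v ++ u, isRot_swap hrot, t ++ [b] ++ q', q ++ [b] ++ s.reverse, ?_⟩
    rw [hud, hvd]; simp
  · have hba : ¬ (b = a) := (ne_of_gt hab)
    have haa : (a = a) := rfl
    simp [List.count_append, List.count_singleton', List.count_cons, hba, List.count_reverse]
    omega

end Dir2

section Dir1

variable {A : Type*} [LinearOrder A]

lemma not_singular_of_unbal {a b : A} (hab : a < b) {w : List A}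
    (hbin : ∀ x ∈ w, x = a ∨ x = b) (u0 v0 : List A)
    (hcf0u : isCFactor u0 w) (hcf0v : isCFactor v0 w) (hlen0 : u0.length = v0.length)
    (hc0 : v0.count a + 2 ≤ u0.count a) : ¬ cyclicSingular w := by
  classical
  intro hsing
  have hab' : ¬ (b = a) := ne_of_gt hab
  have hex : ∃ k, ∃ u v : List A, isCFactor u w ∧ isCFactor v w ∧ u.length = k ∧
      v.length = k ∧ v.count a + 2 ≤ u.count a :=
    ⟨u0.length, u0, v0, hcf0u, hcf0v, rfl, hlen0.symm, hc0⟩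
  obtain ⟨M, hMspec, hMmin⟩ : ∃ M, (∃ u v : List A, isCFactor u w ∧ isCFactor v w ∧
      u.length = M ∧ v.length = M ∧ v.count a + 2 ≤ u.count a) ∧
      ∀ k, k < M → ¬ (∃ u v : List A, isCFactor u w ∧ isCFactor v w ∧ u.length = k ∧
        v.length = k ∧ v.count a + 2 ≤ u.count a) :=
    ⟨Nat.find hex, Nat.find_spec hex, fun k hk => Nat.find_min hex hk⟩
  obtain ⟨u, v, hcfu, hcfv, hlu, hlv, hc⟩ := hMspec
  have hmin : ∀ u' v' : List A, isCFactor u' w → isCFactor v' w → v'.length = u'.length →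
      u'.length < M → v'.count a + 2 ≤ u'.count a → False := by
    intro u' v' h1 h2 h3 h4 h5
    exact hMmin _ h4 ⟨u', v', h1, h2, rfl, h3, h5⟩
  -- M ≥ 2
  have hM2 : 2 ≤ M := by
    by_contra hle
    have h1 : u.count a ≤ u.length := List.count_le_length
    omega
  -- first letters
  obtain ⟨x, u₁, rfl⟩ : ∃ x u₁, u = x :: u₁ := by
    cases u with
    | nil => exfalso; simp at hlu; omega
    | cons x u₁ => exact ⟨x, u₁, rfl⟩
  obtain ⟨y, v₁, rfl⟩ : ∃ y v₁, v = y :: v₁ := by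
    cases v with
    | nil => exfalso; simp at hlv; omega
    | cons y v₁ => exact ⟨y, v₁, rfl⟩
  have hcfu₁ : isCFactor u₁ w := hcfu.infix ⟨[x], [], by simp⟩
  have hcfv₁ : isCFactor v₁ w := hcfv.infix ⟨[y], [], by simp⟩
  have hlen1 : u₁.length + 1 = M ∧ v₁.length + 1 = M := by
    simp only [List.length_cons] at hlu hlv
    exact ⟨hlu, hlv⟩
  have hxa : x = a := by
    rcases hbin x (hcfu.mem (List.mem_cons_self)) with hx | hx
    · exact hx
    · exfalso
      refine hmin u₁ v₁ hcfu₁ hcfv₁ (by omega) (by omega) ?_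
      have h1 : (x :: u₁).count a = u₁.count a := by simp [hx, List.count_cons, hab']
      have h2 : v₁.count a ≤ (y :: v₁).count a := by
        rw [List.count_cons]; omega
      omega
  obtain rfl : a = x := hxa.symm
  have hya : y = b := by
    rcases hbin y (hcfv.mem (List.mem_cons_self)) with hy | hy
    · exfalso
      refine hmin u₁ v₁ hcfu₁ hcfv₁ (by omega) (by omega) ?_
      have h1 : (a :: u₁).count a = u₁.count a + 1 := by simp [List.count_cons]
      have h2 : (y :: v₁).count a = v₁.count a + 1 := by simp [hy, List.count_cons]
      omega
    · exact hy
  obtain rfl : b = y := hya.symm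
  have hcu : (a :: u₁).count a = u₁.count a + 1 := by simp [List.count_cons]
  have hcv : (b :: v₁).count a = v₁.count a := by simp [List.count_cons, hab']
  -- last letters
  obtain (rfl | ⟨m₁, x', rfl⟩) := u₁.eq_nil_or_concat'
  · exfalso; simp at hlen1; omega
  obtain (rfl | ⟨q₁, y', rfl⟩) := v₁.eq_nil_or_concat'
  · exfalso; simp at hlen1; omega
  have hlm : m₁.length + 2 = M := by simp at hlen1 ⊢; omega
  have hlq : q₁.length + 2 = M := by simp at hlen1 ⊢; omega
  have hcfam : isCFactor (a :: m₁) w := hcfu.infix ⟨[], [x'], by simp⟩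
  have hcfbq : isCFactor (b :: q₁) w := hcfv.infix ⟨[], [y'], by simp⟩
  have hxa' : x' = a := by
    rcases hbin x' (hcfu.mem (by simp)) with hx | hx
    · exact hx
    · exfalso
      rcases hbin y' (hcfv.mem (by simp)) with hy | hy <;>
      · refine hmin (a :: m₁) (b :: q₁) hcfam hcfbq (by simp; omega) (by simp; omega) ?_
        simp [List.count_append, List.count_cons, hab', hx, hy] at hc ⊢
        omega
  obtain rfl : a = x' := hxa'.symm
  have hya' : y' = b := by
    rcases hbin y' (hcfv.mem (by simp)) with hy | hy
    · exfalso
      refine hmin (a :: m₁) (b :: q₁) hcfam hcfbq (by simp; omega) (by simp; omega) ?_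
      simp [List.count_append, List.count_cons, hab', hy] at hc ⊢
      omega
    · exact hy
  obtain rfl : b = y' := hya'.symm
  -- now u = a :: m₁ ++ [a], v = b :: q₁ ++ [b]
  have hc2 : q₁.count a ≤ m₁.count a := by
    simp [List.count_append, List.count_cons, hab'] at hc
    omega
  have hK : m₁.count a = q₁.count a := by
    have h0 : ¬ ((b :: q₁).count a + 2 ≤ (a :: m₁).count a) := by
      intro hcon
      exact hmin (a :: m₁) (b :: q₁) hcfam hcfbq (by simp; omega) (by simp; omega) hcon
    simp [List.count_cons, hab'] at h0
    omega
  -- m₁ = q₁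
  have hmq : m₁ = q₁ := by
    by_contra hne
    obtain ⟨c, d, e, z₁, z₂, hde, hm, hq⟩ := exists_mismatch (by omega) hne
    have hdm : d ∈ w := hcfu.mem (by rw [hm]; simp)
    have hem : e ∈ w := hcfv.mem (by rw [hq]; simp)
    have hlcz : c.length + 1 + z₁.length = m₁.length := by
      rw [hm]; simp only [List.length_append, List.length_cons, List.length_reverse]; omega
    have hlcz' : c.length + 1 + z₂.length = q₁.length := by
      rw [hq]; simp only [List.length_append, List.length_cons, List.length_reverse]; omega
    rcases hbin d hdm with hd | hd <;> obtain rfl := hd.symm <;>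
      rcases hbin e hem with he | he <;> obtain rfl := he.symm
    · exact hde rfl
    · -- d = a, e = b : prefixes (a :: c ++ [a]) and (b :: c ++ [b])
      refine hmin ((a :: c) ++ [a]) ((b :: c) ++ [b])
        (hcfu.infix ⟨[], z₁ ++ [a], by rw [hm]; simp⟩)
        (hcfv.infix ⟨[], z₂ ++ [b], by rw [hq]; simp⟩)
        (by simp) (by simp; omega) ?_
      simp [List.count_append, List.count_cons, hab']
    · -- d = b, e = a : suffixes (z₁ ++ [a]) and (z₂ ++ [b])
      refine hmin (z₁ ++ [a]) (z₂ ++ [b])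
        (hcfu.infix ⟨(a :: c) ++ [b], [], by rw [hm]; simp⟩)
        (hcfv.infix ⟨(b :: c) ++ [a], [], by rw [hq]; simp⟩)
        (by simp; omega) (by simp; omega) ?_
      have e1 : m₁.count a = c.count a + z₁.count a := by
        rw [hm]; simp [List.count_append, List.count_cons, hab']
      have e2 : q₁.count a = c.count a + 1 + z₂.count a := by
        rw [hq]; simp [List.count_append, List.count_cons]
        omega
      simp [List.count_append, List.count_cons, hab']
      omega
    · exact hde rfl
  obtain rfl : m₁ = q₁ := hmq
  -- palindrome
  have hpal : m₁.reverse = m₁ := by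
    by_contra hne
    obtain ⟨c, d, e, z₁, z₂, hde, hm, hq⟩ :=
      exists_mismatch (l₁ := m₁) (l₂ := m₁.reverse) (by simp) (fun h => hne h.symm)
    have hm' : m₁ = z₂.reverse ++ e :: c.reverse := by
      have := congrArg List.reverse hq
      simpa using this
    have hdm : d ∈ w := hcfu.mem (by rw [hm]; simp)
    have hem : e ∈ w := hcfu.mem (by rw [hm']; simp)
    have hlcz : c.length + 1 + z₁.length = m₁.length := by
      rw [hm]; simp only [List.length_append, List.length_cons, List.length_reverse]; omega
    have hlcz' : z₂.length + 1 + c.length = m₁.length := by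
      rw [hm']; simp only [List.length_append, List.length_cons, List.length_reverse]; omega
    rcases hbin d hdm with hd | hd <;> obtain rfl := hd.symm <;>
      rcases hbin e hem with he | he <;> obtain rfl := he.symm
    · exact hde rfl
    · -- d = a, e = b : prefix of u is (a :: c ++ [a]), suffix of v is (b :: c.reverse ++ [b])
      refine hmin ((a :: c) ++ [a]) ((b :: c.reverse) ++ [b])
        (hcfu.infix ⟨[], z₁ ++ [a], by rw [hm]; simp⟩)
        (hcfv.infix ⟨b :: z₂.reverse, [], by rw [hm']; simp⟩)
        (by simp) (by simp; omega) ?_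
      simp [List.count_append, List.count_cons, hab']
    · -- d = b, e = a : suffix of u is (a :: c.reverse ++ [a]), prefix of v is (b :: c ++ [b])
      refine hmin ((a :: c.reverse) ++ [a]) ((b :: c) ++ [b])
        (hcfu.infix ⟨a :: z₂.reverse, [], by rw [hm']; simp⟩)
        (hcfv.infix ⟨[], z₁ ++ [b], by rw [hm]; simp⟩)
        (by simp) (by simp; omega) ?_
      simp [List.count_append, List.count_cons, hab']
    · exact hde rfl
  -- occurrence analysis
  obtain ⟨Z, hwZ⟩ := hcfu.front
  have hocc := hcfv
  obtain ⟨r, hr, hinf⟩ := hocc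
  have hr1 : isRot ((a :: (m₁ ++ [a])) ++ Z) r := (hwZ.symm).trans hr
  obtain ⟨s, t, hst, hrts⟩ := hr1
  subst hrts
  have hlenu : (a :: (m₁ ++ [a])).length = M := hlu
  have hlenv : (b :: (m₁ ++ [b])).length = M := hlv
  have hvinf : (b :: (m₁ ++ [b])) <:+: (a :: (m₁ ++ [a])) ++ Z := by
    rcases infix_append_split hinf with hcase | hcase | ⟨v₁, v₂, hv12, hv1ne, hv2ne, hv1, hv2⟩
    · exact hcase.trans (List.IsSuffix.isInfix ⟨s, hst.symm⟩)
    · exact hcase.trans (List.IsPrefix.isInfix ⟨t, hst.symm⟩)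
    · exfalso
      have hv2' : v₂ <+: (a :: (m₁ ++ [a])) ++ Z := hv2.trans ⟨t, hst.symm⟩
      have h1 := congrArg List.length hv12
      have hl1 := List.length_pos_iff.2 hv1ne
      have hl2 := List.length_pos_iff.2 hv2ne
      simp only [List.length_append] at h1
      have hl2' : v₂.length < M := by
        simp only [List.length_cons, List.length_append, List.length_cons] at hlenv
        omega
      have hv2u : v₂ <+: (a :: (m₁ ++ [a])) :=
        List.prefix_of_prefix_length_le hv2' ⟨Z, rfl⟩ (by
          simp only [List.length_cons, List.length_append, List.length_cons] at hlenu
          omega)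
      obtain ⟨u₂, hu2⟩ := hv2u
      have h2 := congrArg List.length hu2
      have c1 := congrArg (List.count a) hv12
      have c2 := congrArg (List.count a) hu2
      simp only [List.length_append, List.count_append] at h2 c1 c2
      refine hmin u₂ v₁ (hcfu.infix (List.IsSuffix.isInfix ⟨v₂, hu2⟩))
        (hcfv.infix (List.IsPrefix.isInfix ⟨v₂, hv12.symm⟩)) ?_ ?_ ?_
      · simp only [List.length_cons, List.length_append, List.length_cons] at hlenu hlenv
        omega
      · simp only [List.length_cons, List.length_append, List.length_cons] at hlenu hlenv
        omega
      · have c3 := hc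
        simp only [List.count_cons, List.count_append] at c3
        omega
  obtain ⟨x, y, hxy⟩ := hvinf
  have hllu : m₁.length + 2 = M := by
    simp only [List.length_cons, List.length_append, List.length_cons] at hlenu
    omega
  rcases le_or_gt M x.length with hge | hlt
  · -- disjoint occurrence: the main construction
    have hxpre : x <+: (a :: (m₁ ++ [a])) ++ Z := ⟨(b :: (m₁ ++ [b])) ++ y, by rw [← hxy]; simp⟩
    have hux : (a :: (m₁ ++ [a])) <+: x :=
      List.prefix_of_prefix_length_le ⟨Z, rfl⟩ hxpre (by omega)
    obtain ⟨X, hX⟩ := hux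
    have hdecu : m₁ ++ [a] ++ X ++ [b] ++ m₁ = m₁ ++ [a] ++ X ++ [b] ++ m₁.reverse := by
      rw [hpal]
    have hdecv : [b] ++ y ++ [a] = ([] : List A) ++ [b] ++ y ++ [a] ++ List.reverse [] := by
      simp
    have hrot' : isRot w ((m₁ ++ [a] ++ X ++ [b] ++ m₁) ++ ([b] ++ y ++ [a])) := by
      refine hwZ.trans ⟨[a], m₁ ++ [a] ++ X ++ (b :: (m₁ ++ [b])) ++ y, ?_, ?_⟩
      · rw [← hxy, ← hX]
        simp
      · simp
    have h1 := hsing _ _ (by simp) (by simp) hrot'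
      (decomp_ne_reverse hab.ne hdecu) (decomp_ne_reverse hab.ne' hdecv)
    exact not_wlt_of_decomp hab hdecv (h1.1 (wlt_of_decomp hab hdecu))
  · -- overlapping: contradiction with minimality
    have hxpre : x <+: (a :: (m₁ ++ [a])) ++ Z := ⟨(b :: (m₁ ++ [b])) ++ y, by rw [← hxy]; simp⟩
    have hxu : x <+: (a :: (m₁ ++ [a])) :=
      List.prefix_of_prefix_length_le hxpre ⟨Z, rfl⟩ (by omega)
    obtain ⟨u', hu'⟩ := id hxu
    have hcancel : u' ++ Z = (b :: (m₁ ++ [b])) ++ y := by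
      have h1 : x ++ ((b :: (m₁ ++ [b])) ++ y) = x ++ (u' ++ Z) := by
        rw [← List.append_assoc, hxy, ← hu']
        simp
      simpa using h1.symm
    have hlu' : x.length + u'.length = M := by
      have := congrArg List.length hu'
      simp only [List.length_append] at this
      omega
    have huv : u' <+: (b :: (m₁ ++ [b])) :=
      List.prefix_of_prefix_length_le ⟨Z, hcancel⟩ ⟨y, rfl⟩ (by omega)
    obtain ⟨v₂, hv2⟩ := huv
    have hlv2 : u'.length + v₂.length = M := by
      have := congrArg List.length hv2
      simp only [List.length_append] at this
      omega
    have c1 := congrArg (List.count a) hu'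
    have c2 := congrArg (List.count a) hv2
    simp only [List.count_append] at c1 c2
    rcases Nat.eq_zero_or_pos x.length with hx0 | hx1
    · -- x empty: impossible since then u = v
      have hxnil : x = [] := List.length_eq_zero_iff.1 hx0
      subst hxnil
      have hv2nil : v₂ = [] := by
        rw [← List.length_eq_zero_iff]
        omega
      subst hv2nil
      simp only [List.nil_append, List.append_nil] at hu' hv2
      have h := hu'.symm.trans hv2
      injection h with h1 h2
      exact hab' h1.symm
    · refine hmin x v₂ (hcfu.infix hxu.isInfix)
        (hcfv.infix (List.IsSuffix.isInfix ⟨u', hv2⟩)) (by omega) (by omega) ?_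
      have c3 := hc
      simp only [List.count_cons, List.count_append] at c3
      omega

end Dir1

theorem stmt11 {A : Type*} [LinearOrder A] (a b : A) (hab : a < b) (w : List A)
    (hbin : ∀ x ∈ w, x = a ∨ x = b) (hne : w ≠ []) :
    cyclicSingular w ↔
      ∀ u v : List A, isCFactor u w → isCFactor v w → u.length = v.length →
        ((u.count a : ℤ) - (v.count a : ℤ)).natAbs ≤ 1 := by
  constructor
  · intro hsing u v hcu hcv hlen
    by_contra hgt
    have h2 : v.count a + 2 ≤ u.count a ∨ u.count a + 2 ≤ v.count a := by omega
    rcases h2 with h | h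
    · exact not_singular_of_unbal hab hbin u v hcu hcv hlen h hsing
    · exact not_singular_of_unbal hab hbin v u hcv hcu hlen.symm h hsing
  · intro hbal u v hune hvne hrot hu hv
    have key : ∀ u' v' : List A, isRot w (u' ++ v') → u' ≠ u'.reverse → v' ≠ v'.reverse →
        wlt u' u'.reverse → ¬ wlt v' v'.reverse → False := by
      intro u' v' hrot' hnu hnv hw1 hw2
      obtain ⟨F1, F2, hF1, hF2, hlen, hcount⟩ := unbal_of_mixed hab hbin hrot' hnu hnv hw1 hw2
      have h3 := hbal F2 F1 hF2 hF1 hlen.symm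
      omega
    constructor
    · intro h1; by_contra h2; exact key u v hrot hu hv h1 h2
    · intro h1; by_contra h2; exact key v u (isRot_swap hrot) hv hu h1 h2
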